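/- Let A be positive semidefinite and T an operator admitting an A-adjoint T^♯. Then dw_A(T)² ≤ sup_{θ∈ℝ} w_A(e^{iθ}T + T^♯T)² − 2·c_A(T)·m_A(T)², where m_A(T) = inf{‖Tx‖_A : ‖x‖_A = 1}. -/

import Mathlib

noncomputable section

namespace DW

variable {H : Type*} [NormedAddCommGroup H] [InnerProductSpace ℂ H]

/-- The semi-inner product induced by `A`: `⟨x,y⟩_A = ⟨Ax, y⟩`. -/
def innA (A : H →L[ℂ] H) (x y : H) : ℂ := inner ℂ (A x) y

/-- The seminorm induced by `A`. -/
def normA (A : H →L[ℂ] H) (x : H) : ℝ := Real.sqrt (innA A x x).re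

/-- `T` is `A`-bounded. -/
def IsABounded (A T : H →L[ℂ] H) : Prop := ∃ c > 0, ∀ x, normA A (T x) ≤ c * normA A x

/-- `S` is an `A`-adjoint of `T`. -/
def IsAAdjointPair (A T S : H →L[ℂ] H) : Prop := ∀ x y, innA A (T x) y = innA A x (S y)

/-- The `A`-operator seminorm. -/
def opNormA (A T : H →L[ℂ] H) : ℝ := sSup {r | ∃ x, normA A x = 1 ∧ r = normA A (T x)}

/-- The `A`-minimum modulus. -/
def mA (A T : H →L[ℂ] H) : ℝ := sInf {r | ∃ x, normA A x = 1 ∧ r = normA A (T x)}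

/-- The `A`-numerical radius. -/
def wA (A T : H →L[ℂ] H) : ℝ :=
  sSup {r | ∃ x, normA A x = 1 ∧ r = ‖innA A (T x) x‖}

/-- The `A`-Crawford number. -/
def cA (A T : H →L[ℂ] H) : ℝ :=
  sInf {r | ∃ x, normA A x = 1 ∧ r = ‖innA A (T x) x‖}

/-- The `A`-Davis-Wielandt radius. -/
def dwA (A T : H →L[ℂ] H) : ℝ :=
  sSup {r | ∃ x, normA A x = 1 ∧
    r = Real.sqrt (‖innA A (T x) x‖ ^ 2 + normA A (T x) ^ 4)}

/-- The semi-inner product on `H ⊕ H` induced by `𝔸 = diag(A,A)`. -/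
def innA2 (A : H →L[ℂ] H) (z w : H × H) : ℂ := innA A z.1 w.1 + innA A z.2 w.2

/-- The seminorm on `H ⊕ H` induced by `𝔸 = diag(A,A)`. -/
def normA2 (A : H →L[ℂ] H) (z : H × H) : ℝ := Real.sqrt (innA2 A z z).re

/-- The `𝔸`-numerical radius on `H ⊕ H`, `𝔸 = diag(A,A)`. -/
def wA2 (A : H →L[ℂ] H) (T : H × H →L[ℂ] H × H) : ℝ :=
  sSup {r | ∃ z, normA2 A z = 1 ∧ r = ‖innA2 A (T z) z‖}

/-- The `𝔸`-Davis-Wielandt radius on `H ⊕ H`, `𝔸 = diag(A,A)`. -/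
def dwA2 (A : H →L[ℂ] H) (T : H × H →L[ℂ] H × H) : ℝ :=
  sSup {r | ∃ z, normA2 A z = 1 ∧
    r = Real.sqrt (‖innA2 A (T z) z‖ ^ 2 + normA2 A (T z) ^ 4)}

/-- The block operator `[[0, X], [Y, 0]]` on `H ⊕ H`. -/
def offDiag (X Y : H →L[ℂ] H) : H × H →L[ℂ] H × H :=
  (X.comp (ContinuousLinearMap.snd ℂ H H)).prod (Y.comp (ContinuousLinearMap.fst ℂ H H))

end DW

open DW

variable {H : Type*} [NormedAddCommGroup H] [InnerProductSpace ℂ H] [CompleteSpace H]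



section Aux

variable {H : Type*} [NormedAddCommGroup H] [InnerProductSpace ℂ H] [CompleteSpace H]
variable {A T T' : H →L[ℂ] H}

lemma myNormA_nonneg (A : H →L[ℂ] H) (x : H) : 0 ≤ normA A x := Real.sqrt_nonneg _

lemma myInnA_conj_symm (hA : A.IsPositive) (x y : H) :
    (starRingEnd ℂ) (innA A x y) = innA A y x := by
  unfold innA
  rw [inner_conj_symm]
  exact (hA.isSelfAdjoint.isSymmetric y x).symm

lemma myInnA_re_nonneg (hA : A.IsPositive) (x : H) : 0 ≤ (innA A x x).re := hA.2 x

lemma myNormA_sq (hA : A.IsPositive) (x : H) : normA A x ^ 2 = (innA A x x).re :=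
  Real.sq_sqrt (myInnA_re_nonneg hA x)

lemma myInnA_self (hA : A.IsPositive) (x : H) :
    innA A x x = ((normA A x ^ 2 : ℝ) : ℂ) := by
  have him : (innA A x x).im = 0 := by
    have := myInnA_conj_symm hA x x
    have h2 := Complex.conj_eq_iff_im.mp this
    exact h2
  apply Complex.ext
  · simp [myNormA_sq hA x]
  · rw [Complex.ofReal_im, him]

lemma myCS (hA : A.IsPositive) (x y : H) :
    ‖innA A x y‖ ≤ normA A x * normA A y := by
  have key : ‖innA A x y‖ * ‖innA A y x‖ ≤ (innA A x x).re * (innA A y y).re := by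
    let c : PreInnerProductSpace.Core ℂ H :=
      { inner := innA A
        conj_inner_symm := fun a b => myInnA_conj_symm hA b a
        re_inner_nonneg := fun a => hA.2 a
        add_left := fun a b z => by simp [innA, inner_add_left]
        smul_left := fun a b r => by simp [innA, inner_smul_left, mul_comm] }
    exact @InnerProductSpace.Core.inner_mul_inner_self_le ℂ H _ _ _ c x y
  have habs : ‖innA A y x‖ = ‖innA A x y‖ := by
    rw [← myInnA_conj_symm hA x y]; simp
  rw [habs] at key
  have : ‖innA A x y‖ ≤ Real.sqrt ((innA A x x).re * (innA A y y).re) :=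
    calc ‖innA A x y‖ = Real.sqrt (‖innA A x y‖ * ‖innA A x y‖) :=
          (Real.sqrt_mul_self (norm_nonneg _)).symm
      _ ≤ _ := Real.sqrt_le_sqrt key
  calc ‖innA A x y‖ ≤ Real.sqrt ((innA A x x).re * (innA A y y).re) := this
    _ = normA A x * normA A y := by
        rw [Real.sqrt_mul (myInnA_re_nonneg hA x)]; rfl

end Aux

section Aux2

set_option linter.unusedSectionVars false

variable {H : Type*} [NormedAddCommGroup H] [InnerProductSpace ℂ H] [CompleteSpace H]
variable {A T T' : H →L[ℂ] H}

lemma myAdjRev (hA : A.IsPositive) (hT' : IsAAdjointPair A T T') (x y : H) :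
    innA A (T' x) y = innA A x (T y) := by
  rw [← myInnA_conj_symm hA y (T' x), ← hT' y x, myInnA_conj_symm hA]

lemma myRmove (hA : A.IsPositive) (hT' : IsAAdjointPair A T T') (x y : H) :
    innA A ((T'.comp T) x) y = innA A x ((T'.comp T) y) := by
  rw [ContinuousLinearMap.comp_apply, myAdjRev hA hT' (T x) y, hT' x (T y)]
  rfl

lemma myRpow_move (hA : A.IsPositive) (hT' : IsAAdjointPair A T T') (n : ℕ) (x y : H) :
    innA A (((T'.comp T)^n) x) y = innA A x (((T'.comp T)^n) y) := by
  induction n generalizing x y with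
  | zero => simp
  | succ k ih =>
      have h1 : ((T'.comp T)^(k+1)) x = ((T'.comp T)^k) ((T'.comp T) x) := by
        rw [pow_succ]; rfl
      have h2 : ((T'.comp T)^(k+1)) y = (T'.comp T) (((T'.comp T)^k) y) := by
        rw [pow_succ']; rfl
      rw [h1, h2, ih, myRmove hA hT']

lemma myRnormsq (hA : A.IsPositive) (hT' : IsAAdjointPair A T T') (n : ℕ) (y : H) :
    normA A (((T'.comp T)^n) y) ^ 2 ≤ normA A y * normA A (((T'.comp T)^(2*n)) y) := by
  have h1 : innA A (((T'.comp T)^n) y) (((T'.comp T)^n) y)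
      = innA A y (((T'.comp T)^(2*n)) y) := by
    rw [myRpow_move hA hT', ← ContinuousLinearMap.mul_apply, ← pow_add, two_mul]
  calc normA A (((T'.comp T)^n) y) ^ 2 = (innA A (((T'.comp T)^n) y) (((T'.comp T)^n) y)).re :=
        myNormA_sq hA _
    _ = (innA A y (((T'.comp T)^(2*n)) y)).re := by rw [h1]
    _ ≤ ‖innA A y (((T'.comp T)^(2*n)) y)‖ := Complex.re_le_norm _
    _ ≤ normA A y * normA A (((T'.comp T)^(2*n)) y) := myCS hA _ _

lemma myIter (hA : A.IsPositive) (hT' : IsAAdjointPair A T T') (x : H)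
    (hx : normA A x = 1) (k : ℕ) :
    normA A (T x) ^ (2^(k+1)) ≤ normA A (((T'.comp T)^(2^k)) x) := by
  induction k with
  | zero =>
      have h1 : innA A (T x) (T x) = innA A x ((T'.comp T) x) := hT' x (T x)
      have : normA A (T x) ^ 2 ≤ normA A ((T'.comp T) x) := by
        calc normA A (T x) ^ 2 = (innA A (T x) (T x)).re := myNormA_sq hA _
          _ = (innA A x ((T'.comp T) x)).re := by rw [h1]
          _ ≤ ‖innA A x ((T'.comp T) x)‖ := Complex.re_le_norm _
          _ ≤ normA A x * normA A ((T'.comp T) x) := myCS hA _ _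
          _ = normA A ((T'.comp T) x) := by rw [hx, one_mul]
      simpa using this
  | succ k ih =>
      have h2 : normA A (T x) ^ (2^(k+2)) = (normA A (T x) ^ (2^(k+1)))^2 := by
        rw [← pow_mul, ← pow_succ]
      have h3 := myRnormsq hA hT' (2^k) x
      rw [hx, one_mul] at h3
      have h4 : 2 * 2^k = 2^(k+1) := by ring
      rw [h4] at h3
      calc normA A (T x) ^ (2^(k+2)) = (normA A (T x) ^ (2^(k+1)))^2 := h2
        _ ≤ normA A (((T'.comp T)^(2^k)) x) ^ 2 := by
            apply pow_le_pow_left₀ (pow_nonneg (myNormA_nonneg A _) _) ih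
        _ ≤ normA A (((T'.comp T)^(2^(k+1))) x) := h3

lemma myNormA_le (hA : A.IsPositive) (y : H) : normA A y ≤ Real.sqrt ‖A‖ * ‖y‖ := by
  have h1 : (innA A y y).re ≤ ‖A‖ * (‖y‖ * ‖y‖) := by
    calc (innA A y y).re ≤ ‖innA A y y‖ := Complex.re_le_norm _
      _ = ‖(innA A y y : ℂ)‖ := rfl
      _ ≤ ‖A y‖ * ‖y‖ := norm_inner_le_norm _ _
      _ ≤ ‖A‖ * ‖y‖ * ‖y‖ := by
          have := A.le_opNorm y
          nlinarith [norm_nonneg y]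
      _ = ‖A‖ * (‖y‖ * ‖y‖) := by ring
  calc normA A y = Real.sqrt (innA A y y).re := rfl
    _ ≤ Real.sqrt (‖A‖ * (‖y‖ * ‖y‖)) := Real.sqrt_le_sqrt h1
    _ = Real.sqrt ‖A‖ * ‖y‖ := by
        rw [Real.sqrt_mul (norm_nonneg A), Real.sqrt_mul_self (norm_nonneg y)]

lemma myPowLimit {a b C : ℝ} (ha : 0 ≤ a) (hb : 0 ≤ b)
    (h : ∀ k : ℕ, a ^ (2^k) ≤ C * b ^ (2^k)) : a ≤ b := by
  by_contra hab
  push_neg at hab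
  rcases eq_or_lt_of_le hb with hb0 | hb0
  · have h0 := h 0
    simp [← hb0] at h0
    exact absurd hab (by simpa [← hb0] using not_lt.mpr (le_of_le_of_eq h0 rfl) : ¬ b < a)
  · have h1 : 1 < a / b := (one_lt_div hb0).mpr hab
    obtain ⟨n, hn⟩ := pow_unbounded_of_one_lt C h1
    have h2 : (a/b)^n ≤ (a/b)^(2^n) := pow_le_pow_right₀ h1.le ((Nat.lt_two_pow_self (n := n))).le
    have h3 : (a/b)^(2^n) ≤ C := by
      rw [div_pow, div_le_iff₀ (pow_pos hb0 _)]
      exact h n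
    linarith

lemma myTbound (hA : A.IsPositive) (hT' : IsAAdjointPair A T T') (x : H)
    (hx : normA A x = 1) : normA A (T x) ≤ Real.sqrt ‖T'.comp T‖ := by
  have key : ∀ k : ℕ, (normA A (T x)^2) ^ (2^k)
      ≤ (Real.sqrt ‖A‖ * ‖x‖) * ‖T'.comp T‖ ^ (2^k) := by
    intro k
    have h1 := myIter hA hT' x hx k
    have h2 : normA A (((T'.comp T)^(2^k)) x) ≤ Real.sqrt ‖A‖ * (‖T'.comp T‖^(2^k) * ‖x‖) := by
      calc normA A (((T'.comp T)^(2^k)) x) ≤ Real.sqrt ‖A‖ * ‖((T'.comp T)^(2^k)) x‖ :=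
            myNormA_le hA _
        _ ≤ Real.sqrt ‖A‖ * (‖T'.comp T‖^(2^k) * ‖x‖) := by
            apply mul_le_mul_of_nonneg_left _ (Real.sqrt_nonneg _)
            calc ‖((T'.comp T)^(2^k)) x‖ ≤ ‖(T'.comp T)^(2^k)‖ * ‖x‖ :=
                  ContinuousLinearMap.le_opNorm _ _
              _ ≤ ‖T'.comp T‖^(2^k) * ‖x‖ := by
                  apply mul_le_mul_of_nonneg_right _ (norm_nonneg x)
                  exact norm_pow_le' _ (by positivity)
    calc (normA A (T x)^2) ^ (2^k) = normA A (T x) ^ (2^(k+1)) := by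
          rw [← pow_mul, ← pow_succ']
      _ ≤ normA A (((T'.comp T)^(2^k)) x) := h1
      _ ≤ Real.sqrt ‖A‖ * (‖T'.comp T‖^(2^k) * ‖x‖) := h2
      _ = (Real.sqrt ‖A‖ * ‖x‖) * ‖T'.comp T‖ ^ (2^k) := by ring
  have hfin : normA A (T x)^2 ≤ ‖T'.comp T‖ := myPowLimit (sq_nonneg _) (norm_nonneg _) key
  have := Real.sqrt_le_sqrt hfin
  rwa [Real.sqrt_sq (myNormA_nonneg A _)] at this

end Aux2

section Main

set_option linter.unusedSectionVars false
set_option maxHeartbeats 1000000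

variable {H : Type*} [NormedAddCommGroup H] [InnerProductSpace ℂ H] [CompleteSpace H]

lemma myInnA_apply (A T S : H →L[ℂ] H) (c : ℂ) (x y : H) :
    innA A ((c • T + S) x) y = (starRingEnd ℂ) c * innA A (T x) y + innA A (S x) y := by
  simp [innA, ContinuousLinearMap.add_apply, ContinuousLinearMap.smul_apply, map_add,
    map_smul, inner_add_left, inner_smul_left, mul_comm]

lemma myInnA_R_self (A T T' : H →L[ℂ] H) (hA : A.IsPositive) (hT' : IsAAdjointPair A T T')
    (x : H) : innA A ((T'.comp T) x) x = ((normA A (T x) ^ 2 : ℝ) : ℂ) := by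
  have h1 : innA A ((T'.comp T) x) x = innA A (T x) (T x) := myAdjRev hA hT' (T x) x
  rw [h1, myInnA_self hA]

theorem stmt6_aux (A T T' : H →L[ℂ] H) (hA : A.IsPositive) (hT' : IsAAdjointPair A T T') :
    dwA A T ^ 2 ≤
      sSup {r : ℝ | ∃ θ : ℝ, r = wA A (Complex.exp (θ * Complex.I) • T + T'.comp T) ^ 2}
        - 2 * cA A T * mA A T ^ 2 := by
  by_cases hex : ∃ x : H, normA A x = 1
  · obtain ⟨x₀, hx₀⟩ := hex
    set K : ℝ := Real.sqrt ‖T'.comp T‖ with hKdef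
    have hK0 : 0 ≤ K := Real.sqrt_nonneg _
    -- bound on each numerical-radius element
    have hWel : ∀ (θ : ℝ) (x : H), normA A x = 1 →
        ‖innA A ((Complex.exp (θ * Complex.I) • T + T'.comp T) x) x‖ ≤ K + K ^ 2 := by
      intro θ x hx
      rw [myInnA_apply]
      have hTb : normA A (T x) ≤ K := myTbound hA hT' x hx
      have h1 : ‖(starRingEnd ℂ) (Complex.exp (θ * Complex.I)) * innA A (T x) x‖
          ≤ K := by
        rw [norm_mul, Complex.norm_conj, Complex.norm_exp_ofReal_mul_I, one_mul]
        calc ‖innA A (T x) x‖ ≤ normA A (T x) * normA A x := myCS hA _ _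
          _ = normA A (T x) := by rw [hx, mul_one]
          _ ≤ K := hTb
      have h2 : ‖innA A ((T'.comp T) x) x‖ ≤ K ^ 2 := by
        rw [myInnA_R_self A T T' hA hT', Complex.norm_real, Real.norm_eq_abs,
          abs_of_nonneg (by positivity : (0:ℝ) ≤ normA A (T x) ^ 2)]
        exact pow_le_pow_left₀ (myNormA_nonneg A _) hTb 2
      calc ‖_‖ ≤ ‖(starRingEnd ℂ) (Complex.exp (θ * Complex.I))
              * innA A (T x) x‖ + ‖innA A ((T'.comp T) x) x‖ :=
            norm_add_le _ _
        _ ≤ K + K ^ 2 := add_le_add h1 h2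
    -- bddAbove of each wA set
    have hWbdd : ∀ θ : ℝ, BddAbove {r | ∃ x, normA A x = 1 ∧
        r = ‖innA A ((Complex.exp (θ * Complex.I) • T + T'.comp T) x) x‖} := by
      intro θ
      exact ⟨K + K ^ 2, by rintro r ⟨x, hx, rfl⟩; exact hWel θ x hx⟩
    have hWle : ∀ θ : ℝ, wA A (Complex.exp (θ * Complex.I) • T + T'.comp T) ≤ K + K ^ 2 := by
      intro θ
      apply Real.sSup_le
      · rintro r ⟨x, hx, rfl⟩; exact hWel θ x hx
      · positivity
    have hW0 : ∀ θ : ℝ, 0 ≤ wA A (Complex.exp (θ * Complex.I) • T + T'.comp T) := by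
      intro θ
      refine le_trans (norm_nonneg _) (le_csSup (hWbdd θ) ⟨x₀, hx₀, rfl⟩)
    -- the θ-sup set
    have hEbdd : BddAbove {r : ℝ | ∃ θ : ℝ,
        r = wA A (Complex.exp (θ * Complex.I) • T + T'.comp T) ^ 2} := by
      refine ⟨(K + K ^ 2) ^ 2, ?_⟩
      rintro r ⟨θ, rfl⟩
      exact pow_le_pow_left₀ (hW0 θ) (hWle θ) 2
    -- Crawford and minimum modulus facts
    have hcbdd : BddBelow {r | ∃ x, normA A x = 1 ∧ r = ‖innA A (T x) x‖} :=
      ⟨0, by rintro r ⟨x, hx, rfl⟩; positivity⟩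
    have hmbdd : BddBelow {r | ∃ x, normA A x = 1 ∧ r = normA A (T x)} :=
      ⟨0, by rintro r ⟨x, hx, rfl⟩; exact myNormA_nonneg A _⟩
    have hcA_le : ∀ x : H, normA A x = 1 → cA A T ≤ ‖innA A (T x) x‖ :=
      fun x hx => csInf_le hcbdd ⟨x, hx, rfl⟩
    have hmA_le : ∀ x : H, normA A x = 1 → mA A T ≤ normA A (T x) :=
      fun x hx => csInf_le hmbdd ⟨x, hx, rfl⟩
    have hcA0 : 0 ≤ cA A T :=
      Real.sInf_nonneg (by rintro r ⟨x, hx, rfl⟩; positivity)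
    have hmA0 : 0 ≤ mA A T :=
      Real.sInf_nonneg (by rintro r ⟨x, hx, rfl⟩; exact myNormA_nonneg A _)
    -- main pointwise estimate
    have hmain : ∀ x : H, normA A x = 1 →
        ‖innA A (T x) x‖ ^ 2 + normA A (T x) ^ 4 ≤
          sSup {r : ℝ | ∃ θ : ℝ,
            r = wA A (Complex.exp (θ * Complex.I) • T + T'.comp T) ^ 2}
          - 2 * cA A T * mA A T ^ 2 := by
      intro x hx
      set z : ℂ := innA A (T x) x with hz
      set θ : ℝ := z.arg with hθ
      set α : ℝ := ‖z‖ with hα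
      set β : ℝ := normA A (T x) with hβ
      have hα0 : 0 ≤ α := norm_nonneg _
      have hβ0 : 0 ≤ β := myNormA_nonneg A _
      have hrot : (starRingEnd ℂ) (Complex.exp (θ * Complex.I)) * z = (α : ℂ) := by
        have h1 : (starRingEnd ℂ) (Complex.exp (↑θ * Complex.I))
            = Complex.exp (-(↑θ * Complex.I)) := by
          rw [← Complex.exp_conj]
          congr 1
          simp [map_mul, Complex.conj_ofReal, Complex.conj_I]
        rw [h1, ← Complex.norm_mul_exp_arg_mul_I z, ← hθ, ← hα]
        rw [mul_comm ((α : ℂ)) _, ← mul_assoc, ← Complex.exp_add, neg_add_cancel,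
          Complex.exp_zero, one_mul]
      have hval : ‖innA A ((Complex.exp (θ * Complex.I) • T + T'.comp T) x) x‖
          = α + β ^ 2 := by
        rw [myInnA_apply, ← hz, hrot, myInnA_R_self A T T' hA hT', ← hβ,
          ← Complex.ofReal_add, Complex.norm_real, Real.norm_eq_abs]
        exact abs_of_nonneg (by positivity)
      have hw1 : α + β ^ 2 ≤ wA A (Complex.exp (θ * Complex.I) • T + T'.comp T) := by
        rw [← hval]
        exact le_csSup (hWbdd θ) ⟨x, hx, rfl⟩
      have hw2 : wA A (Complex.exp (θ * Complex.I) • T + T'.comp T) ^ 2 ≤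
          sSup {r : ℝ | ∃ θ : ℝ,
            r = wA A (Complex.exp (θ * Complex.I) • T + T'.comp T) ^ 2} :=
        le_csSup hEbdd ⟨θ, rfl⟩
      have hsq : (α + β ^ 2) ^ 2 ≤
          wA A (Complex.exp (θ * Complex.I) • T + T'.comp T) ^ 2 :=
        pow_le_pow_left₀ (by positivity) hw1 2
      have hcm : cA A T * mA A T ^ 2 ≤ α * β ^ 2 := by
        apply mul_le_mul (hcA_le x hx) _ (by positivity) hα0
        exact pow_le_pow_left₀ hmA0 (hmA_le x hx) 2
      nlinarith [hsq.trans hw2]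
    -- conclude
    set S : ℝ := sSup {r : ℝ | ∃ θ : ℝ,
        r = wA A (Complex.exp (θ * Complex.I) • T + T'.comp T) ^ 2} - 2 * cA A T * mA A T ^ 2
      with hSdef
    have hS0 : 0 ≤ S := le_trans (by positivity) (hmain x₀ hx₀)
    have hdwle : dwA A T ≤ Real.sqrt S := by
      apply Real.sSup_le
      · rintro r ⟨x, hx, rfl⟩
        exact Real.sqrt_le_sqrt (hmain x hx)
      · exact Real.sqrt_nonneg _
    have hdw0 : 0 ≤ dwA A T :=
      Real.sSup_nonneg (by rintro r ⟨x, hx, rfl⟩; exact Real.sqrt_nonneg _)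
    calc dwA A T ^ 2 ≤ Real.sqrt S ^ 2 := pow_le_pow_left₀ hdw0 hdwle 2
      _ = S := Real.sq_sqrt hS0
  · -- degenerate case: no A-unit vector
    have hempty : ∀ (f : H → ℝ), {r | ∃ x, normA A x = 1 ∧ r = f x} = (∅ : Set ℝ) := by
      intro f
      ext r
      simp only [Set.mem_setOf_eq, Set.mem_empty_iff_false, iff_false, not_exists]
      rintro x ⟨hx, -⟩
      exact hex ⟨x, hx⟩
    have hdw : dwA A T = 0 := by
      unfold dwA; rw [hempty, Real.sSup_empty]
    have hcA : cA A T = 0 := by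
      unfold cA; rw [hempty, Real.sInf_empty]
    have hmA : mA A T = 0 := by
      unfold mA; rw [hempty, Real.sInf_empty]
    have hwA : ∀ θ : ℝ, wA A (Complex.exp (θ * Complex.I) • T + T'.comp T) = 0 := by
      intro θ; unfold wA; rw [hempty, Real.sSup_empty]
    have hE : {r : ℝ | ∃ θ : ℝ,
        r = wA A (Complex.exp (θ * Complex.I) • T + T'.comp T) ^ 2} = {(0:ℝ)} := by
      ext r
      simp only [Set.mem_setOf_eq, Set.mem_singleton_iff]
      constructor
      · rintro ⟨θ, rfl⟩; rw [hwA θ]; ring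
      · rintro rfl; exact ⟨0, by rw [hwA 0]; ring⟩
    rw [hdw, hcA, hmA, hE, csSup_singleton]
    norm_num

end Main

theorem stmt6 (A T T' : H →L[ℂ] H) (hA : A.IsPositive) (hT' : IsAAdjointPair A T T') :
    dwA A T ^ 2 ≤
      sSup {r : ℝ | ∃ θ : ℝ, r = wA A (Complex.exp (θ * Complex.I) • T + T'.comp T) ^ 2}
        - 2 * cA A T * mA A T ^ 2 := by
  exact stmt6_aux A T T' hA hT'
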